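/- Let X be a nonnegative integrable random variable with Pr(X = 0) ≥ 1/2, E(X) ≥ k for some k > 0, let λ > 1/k, let A be an event with Pr(A) = q > 0 on which X ≥ E(X) + c·q + c for some c ∈ (0, 1], and let Y = X + c·1_A. If X ≥ E(Y) on A, then the semivariance-penalized expectations satisfy E(Y) − λ·SV(Y) < E(X) − λ·SV(X). -/

import Mathlib

open MeasureTheory

private lemma sq_mono_of_nonpos {x y : ℝ} (hxy : x ≤ y) (hy : y ≤ 0) :
    y ^ 2 ≤ x ^ 2 := by nlinarith

/-- For nonnegative X with Pr(X = 0) ≥ 1/2, E(X) ≥ k > 0, λ > 1/k, an event A of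
    probability q > 0 on which X ≥ E(X) + cq + c with c ∈ (0,1], and Y = X + c·1_A
    with X ≥ E(Y) on A, the semivariance-penalized expectation of Y is strictly
    smaller than that of X. -/
theorem svpe_strictly_decreases {Ω : Type*} [MeasurableSpace Ω] (μ : Measure Ω)
    [IsProbabilityMeasure μ] (X : Ω → ℝ) (hX : Integrable X μ)
    (hpos : ∀ ω, 0 ≤ X ω)
    (hzero : (1/2 : ENNReal) ≤ μ {ω | X ω = 0})
    (k : ℝ) (hk : 0 < k) (hEk : k ≤ ∫ ω, X ω ∂μ)
    (lam : ℝ) (hlam : 1 / k < lam)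
    (A : Set Ω) (hA : MeasurableSet A) (q : ℝ) (hq : 0 < q)
    (hμA : μ A = ENNReal.ofReal q)
    (c : ℝ) (hc : c ∈ Set.Ioc (0:ℝ) 1)
    (hAbig : ∀ ω ∈ A, (∫ ω', X ω' ∂μ) + c * q + c ≤ X ω)
    (Y : Ω → ℝ) (hYdef : Y = fun ω => X ω + A.indicator (fun _ => c) ω)
    (hAEY : ∀ ω ∈ A, (∫ ω', Y ω' ∂μ) ≤ X ω) :
    (∫ ω, Y ω ∂μ) - lam * (∫ ω, (min (Y ω - ∫ ω', Y ω' ∂μ) 0)^2 ∂μ)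
      < (∫ ω, X ω ∂μ) - lam * (∫ ω, (min (X ω - ∫ ω', X ω' ∂μ) 0)^2 ∂μ) := by
  obtain ⟨hc0, hc1⟩ := hc
  set m := ∫ ω, X ω ∂μ with hm
  have hm_pos : 0 < m := lt_of_lt_of_le hk hEk
  have hind : Integrable (A.indicator (fun _ => c)) μ :=
    (integrable_indicator_iff hA).2 ((integrable_const c).integrableOn)
  have hYint : Integrable Y μ := by rw [hYdef]; exact hX.add hind
  have hEY : (∫ ω, Y ω ∂μ) = m + c * q := by
    rw [hYdef, integral_add hX hind, integral_indicator_const c hA, measureReal_def, hμA,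
      ENNReal.toReal_ofReal hq.le, smul_eq_mul, mul_comm]
  have hcq : 0 < c * q := mul_pos hc0 hq
  have hYpos : ∀ ω, 0 ≤ Y ω := by
    intro ω; rw [hYdef]
    refine add_nonneg (hpos ω) ?_
    exact Set.indicator_nonneg (fun _ _ => hc0.le) ω
  rw [hEY]
  -- the two semivariance integrands
  set f := fun ω => (min (X ω - m) 0) ^ 2 with hfdef
  set g := fun ω => (min (Y ω - (m + c * q)) 0) ^ 2 with hgdef
  have hfmeas : AEStronglyMeasurable f μ := by
    have : Continuous fun x : ℝ => (min (x - m) 0) ^ 2 := by continuity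
    exact this.comp_aestronglyMeasurable hX.1
  have hgmeas : AEStronglyMeasurable g μ := by
    have : Continuous fun x : ℝ => (min (x - (m + c * q)) 0) ^ 2 := by continuity
    exact this.comp_aestronglyMeasurable hYint.1
  have hfint : Integrable f μ := by
    refine Integrable.mono' (integrable_const (m ^ 2)) hfmeas ?_
    refine Filter.Eventually.of_forall fun ω => ?_
    rw [Real.norm_eq_abs, abs_of_nonneg (sq_nonneg _)]
    have h1 : -m ≤ min (X ω - m) 0 := le_min (by linarith [hpos ω]) (by linarith)
    have h2 : min (X ω - m) 0 ≤ m := le_trans (min_le_right _ _) hm_pos.le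
    exact sq_le_sq' h1 h2
  have hgint : Integrable g μ := by
    refine Integrable.mono' (integrable_const ((m + c * q) ^ 2)) hgmeas ?_
    refine Filter.Eventually.of_forall fun ω => ?_
    rw [Real.norm_eq_abs, abs_of_nonneg (sq_nonneg _)]
    have h1 : -(m + c * q) ≤ min (Y ω - (m + c * q)) 0 :=
      le_min (by linarith [hYpos ω]) (by linarith)
    have h2 : min (Y ω - (m + c * q)) 0 ≤ m + c * q :=
      le_trans (min_le_right _ _) (by linarith)
    exact sq_le_sq' h1 h2
  -- a measurable version of {X = 0}
  set X' := hX.1.mk X with hX'def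
  have hXX' : X =ᵐ[μ] X' := hX.1.ae_eq_mk
  set S := X' ⁻¹' {0} with hSdef
  have hSmeas : MeasurableSet S :=
    hX.1.stronglyMeasurable_mk.measurable (measurableSet_singleton (0:ℝ))
  have hSμ : (1/2 : ENNReal) ≤ μ S := by
    have hae : {ω | X ω = 0} =ᵐ[μ] S := by
      rw [Filter.eventuallyEq_set]
      filter_upwards [hXX'] with ω hω
      simp [hSdef, Set.mem_preimage, hω]
    calc (1/2 : ENNReal) ≤ μ {ω | X ω = 0} := hzero
      _ = μ S := measure_congr hae
  have hSreal : (1/2 : ℝ) ≤ (μ S).toReal := by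
    have h1 : ((1/2 : ENNReal)).toReal ≤ (μ S).toReal :=
      ENNReal.toReal_mono (measure_ne_top μ S) hSμ
    simpa using h1
  set d : ℝ := 2 * m * (c * q) + (c * q) ^ 2 with hddef
  have hd_pos : 0 < d := by positivity
  -- key pointwise inequality
  have key : ∀ᵐ ω ∂μ, S.indicator (fun _ => d) ω ≤ g ω - f ω := by
    filter_upwards [hXX'] with ω hω
    by_cases hωS : ω ∈ S
    · -- X ω = 0, hence ω ∉ A
      have hX0 : X ω = 0 := by rw [hω]; exact hωS
      have hωA : ω ∉ A := fun h => by
        have := hAbig ω h; rw [hX0] at this; nlinarith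
      have hYω : Y ω = 0 := by
        rw [hYdef]; simp [Set.indicator_of_notMem hωA, hX0]
      have hfω : f ω = m ^ 2 := by
        simp only [hfdef, hX0, zero_sub, min_eq_left (neg_nonpos_of_nonneg hm_pos.le)]
        ring
      have hgω : g ω = (m + c * q) ^ 2 := by
        simp only [hgdef, hYω, zero_sub,
          min_eq_left (neg_nonpos_of_nonneg (by linarith : (0:ℝ) ≤ m + c * q))]
        ring
      rw [Set.indicator_of_mem hωS, hfω, hgω]; ring_nf; nlinarith
    · rw [Set.indicator_of_notMem hωS]
      by_cases hωA : ω ∈ A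
      · -- both are zero
        have hXbig : m + c * q + c ≤ X ω := hAbig ω hωA
        have hYbig : m + c * q ≤ X ω := by rw [← hEY]; exact hAEY ω hωA
        have hYω : Y ω = X ω + c := by
          rw [hYdef]; simp [Set.indicator_of_mem hωA]
        have hfω : f ω = 0 := by
          simp only [hfdef, min_eq_right (by linarith : (0:ℝ) ≤ X ω - m)]; ring
        have hgω : g ω = 0 := by
          simp only [hgdef, hYω,
            min_eq_right (by linarith : (0:ℝ) ≤ X ω + c - (m + c * q))]; ring
        rw [hfω, hgω]; norm_num
      · have hYω : Y ω = X ω := by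
          rw [hYdef]; simp [Set.indicator_of_notMem hωA]
        have h1 : min (Y ω - (m + c * q)) 0 ≤ min (X ω - m) 0 := by
          rw [hYω]; exact min_le_min (by linarith) le_rfl
        have h2 : min (X ω - m) 0 ≤ 0 := min_le_right _ _
        have := sq_mono_of_nonpos h1 h2
        simp only [hfdef, hgdef]; linarith
  have hindS : Integrable (S.indicator (fun _ => d)) μ :=
    (integrable_indicator_iff hSmeas).2 ((integrable_const d).integrableOn)
  have hmono : ∫ ω, S.indicator (fun _ => d) ω ∂μ ≤ ∫ ω, (g ω - f ω) ∂μ :=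
    integral_mono_ae hindS (hgint.sub hfint) key
  have hindval : ∫ ω, S.indicator (fun _ => d) ω ∂μ = (μ S).toReal * d := by
    rw [integral_indicator_const _ hSmeas, smul_eq_mul, measureReal_def]
  have hdiff : ∫ ω, (g ω - f ω) ∂μ = (∫ ω, g ω ∂μ) - (∫ ω, f ω ∂μ) :=
    integral_sub hgint hfint
  have hDlow : k * (c * q) ≤ (∫ ω, g ω ∂μ) - (∫ ω, f ω ∂μ) := by
    rw [← hdiff]
    calc k * (c * q) ≤ m * (c * q) := mul_le_mul_of_nonneg_right hEk hcq.le
      _ ≤ (1/2 : ℝ) * d := by rw [hddef]; nlinarith [sq_nonneg (c * q)]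
      _ ≤ (μ S).toReal * d := mul_le_mul_of_nonneg_right hSreal hd_pos.le
      _ = ∫ ω, S.indicator (fun _ => d) ω ∂μ := hindval.symm
      _ ≤ _ := hmono
  clear_value m f g X' S d
  have hlamk : 1 < lam * k := by rwa [div_lt_iff₀ hk] at hlam
  have hlam_pos : 0 < lam := lt_trans (by positivity) hlam
  have hfinal : c * q < lam * ((∫ ω, g ω ∂μ) - (∫ ω, f ω ∂μ)) :=
    calc c * q = 1 * (c * q) := (one_mul _).symm
      _ < (lam * k) * (c * q) := mul_lt_mul_of_pos_right hlamk hcq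
      _ = lam * (k * (c * q)) := by ring
      _ ≤ _ := mul_le_mul_of_nonneg_left hDlow hlam_pos.le
  have e1 : integral μ g = ∫ ω, g ω ∂μ := rfl
  have e2 : integral μ f = ∫ ω, f ω ∂μ := rfl
  rw [e1, e2]
  linarith only [hfinal]
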